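/- Let (T,ℓ) be a degree tree, v a node of T, and w the certificate of v. Then either w = v, or v is an internal node and w is a descendant of v lying in the subtree T_* induced by the leftmost child of v; in the latter case, w is not the last node of T_* in preorder. -/

import Mathlib

/-! ### Dyck paths: `true` = up step, `false` = down step -/

/-- A Dyck word: every prefix has at least as many up steps as down steps,
and the whole word has equally many. -/
def IsDyck (w : List Bool) : Prop :=
  (∀ k ≤ w.length, (w.take k).count false ≤ (w.take k).count true) ∧
    w.count false = w.count true

instance : DecidablePred IsDyck := fun w => by
  unfold IsDyck; infer_instance

/-- `w` is a Dyck path of size `n` (length `2n`). -/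
def IsDyckOfSize (n : ℕ) (w : List Bool) : Prop := IsDyck w ∧ w.length = 2 * n

/-- The 0-based position of the `i`-th (1-based) up step of `w`. -/
def upPos (w : List Bool) (i : ℕ) : ℕ :=
  ((List.range w.length).filter (fun p => w.getD p false)).getD (i - 1) w.length

/-- The 0-based position of the down step matching the `i`-th (1-based) up step:
the unique down step such that the factor strictly between them is a Dyck word. -/
def matchPos (w : List Bool) (i : ℕ) : ℕ :=
  ((List.range w.length).filter (fun q =>
      decide (upPos w i < q) && !(w.getD q true) &&
        decide (IsDyck ((w.drop (upPos w i + 1)).take (q - (upPos w i + 1)))))).headD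
    w.length

/-- Bracket vector: `bracket w i` is the size (half-length) of the factor of `w`
strictly between the `i`-th up step and its matching down step. -/
def bracket (w : List Bool) (i : ℕ) : ℕ := (matchPos w i - (upPos w i + 1)) / 2

/-- The factor of `w` strictly between the `i`-th up step and its matching down step. -/
def Pslice (w : List Bool) (i : ℕ) : List Bool :=
  (w.drop (upPos w i + 1)).take (matchPos w i - (upPos w i + 1))

/-- `Type(w)_i`: `1` if the `i`-th up step is immediately followed by an up step, else `0`. -/
def typ (w : List Bool) (i : ℕ) : ℕ := if w.getD (upPos w i + 1) false then 1 else 0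

/-- Number of rising contacts: up steps starting on the x-axis. -/
def risingContacts (w : List Bool) : ℕ :=
  ((List.range w.length).filter (fun p =>
      w.getD p false && ((w.take p).count true == (w.take p).count false))).length

/-- Tamari order via bracket vectors. -/
def TamariLE (n : ℕ) (P Q : List Bool) : Prop :=
  ∀ i, 1 ≤ i → i ≤ n → bracket P i ≤ bracket Q i

/-- A Tamari interval of size `n`. -/
def IsTamariInterval (n : ℕ) (P Q : List Bool) : Prop :=
  IsDyckOfSize n P ∧ IsDyckOfSize n Q ∧ TamariLE n P Q

/-- A new interval of size `n` (Chapoton): `V_Q(1)` is maximal (the source states this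
condition as `V_Q(1) = n`, with its convention relating trees of size `n` to intervals of
size `n + 1`; for the strict-factor bracket vector of a path of size `n` this maximal
value is `n - 1`), and `V_Q(i) > 0` implies `V_P(i) ≤ V_Q(i+1)`. -/
def IsNewInterval (n : ℕ) (P Q : List Bool) : Prop :=
  IsTamariInterval n P Q ∧ bracket Q 1 + 1 = n ∧
    ∀ i, 1 ≤ i → i ≤ n → 0 < bracket Q i → bracket P i ≤ bracket Q (i + 1)

/-- Number of indices `1 ≤ i ≤ n` with `(Type(P)_i, Type(Q)_i) = (0,0)`. -/
def c00 (n : ℕ) (P Q : List Bool) : ℕ :=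
  ((Finset.Icc 1 n).filter (fun i => typ P i = 0 ∧ typ Q i = 0)).card

/-- Number of indices `1 ≤ i ≤ n` with `(Type(P)_i, Type(Q)_i) = (0,1)`. -/
def c01 (n : ℕ) (P Q : List Bool) : ℕ :=
  ((Finset.Icc 1 n).filter (fun i => typ P i = 0 ∧ typ Q i = 1)).card

/-- Number of indices `1 ≤ i ≤ n` with `(Type(P)_i, Type(Q)_i) = (1,1)`. -/
def c11 (n : ℕ) (P Q : List Bool) : ℕ :=
  ((Finset.Icc 1 n).filter (fun i => typ P i = 1 ∧ typ Q i = 1)).card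

/-! ### Plane trees with integer node labels -/

/-- A plane tree whose nodes carry labels in `ℤ`. -/
inductive LTree : Type where
  | node : ℤ → List LTree → LTree

instance : Inhabited LTree := ⟨.node 0 []⟩

/-- The label of the root. -/
def LTree.label : LTree → ℤ
  | .node l _ => l

/-- The list of children (subtrees) of the root, from left to right. -/
def LTree.children : LTree → List LTree
  | .node _ ts => ts

/-- Whether the root is a leaf. -/
def LTree.isLeaf (t : LTree) : Bool := t.children.isEmpty

mutual
/-- The size of a tree = number of edges. -/
def LTree.size : LTree → ℕ
  | .node _ ts => LTree.sizeList ts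
def LTree.sizeList : List LTree → ℕ
  | [] => 0
  | t :: ts => 1 + t.size + LTree.sizeList ts
end

/-- The label `a` of the leftmost descending edge of the root (0 for a leaf),
recovered from the node labels: `ℓ(v) = k - a + ℓ(v₁) + ⋯ + ℓ(v_k)`. -/
def LTree.aVal : LTree → ℤ
  | .node _ [] => 0
  | .node l ts => (ts.length : ℤ) + (ts.map LTree.label).sum - l

/-- `(T, ℓ)` is a degree tree: leaves are labeled `0` and every internal node `v`
with children `v₁, …, v_k` satisfies `ℓ(v) = k - a + ℓ(v₁) + ⋯ + ℓ(v_k)` for some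
`0 ≤ a ≤ ℓ(v₁)`. -/
inductive IsDegreeTree : LTree → Prop where
  | leaf : IsDegreeTree (.node 0 [])
  | internal (l a : ℤ) (t₁ : LTree) (ts : List LTree)
      (h₁ : IsDegreeTree t₁) (h : ∀ t ∈ ts, IsDegreeTree t)
      (ha₀ : 0 ≤ a) (ha₁ : a ≤ t₁.label)
      (hl : l = ((1 + ts.length : ℕ) : ℤ) - a + (t₁.label + (ts.map LTree.label).sum)) :
      IsDegreeTree (.node l (t₁ :: ts))

mutual
/-- The list of all subtrees of `T` (one for each node), in preorder. -/
def LTree.preSub : LTree → List LTree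
  | .node l ts => .node l ts :: LTree.preSubList ts
def LTree.preSubList : List LTree → List LTree
  | [] => []
  | t :: ts => t.preSub ++ LTree.preSubList ts
end

/-- The subtree induced by the `i`-th node (0-based) of `T` in preorder. -/
def LTree.nth (T : LTree) (i : ℕ) : LTree := T.preSub.getD i default

mutual
/-- Sum of the edge labels `ℓ_Λ(e)` over all edges of the tree (the leftmost
descending edge of each internal node carries `a`, all other edges carry `0`). -/
def LTree.eSum : LTree → ℤ
  | .node l ts => LTree.aVal (.node l ts) + LTree.eSumList ts
def LTree.eSumList : List LTree → ℤ
  | [] => 0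
  | t :: ts => t.eSum + LTree.eSumList ts
end

mutual
/-- The Dyck word of a plane tree under the classical bijection
(recording the depth evolution along the preorder traversal). -/
def LTree.toDyck : LTree → List Bool
  | .node _ ts => LTree.toDyckList ts
def LTree.toDyckList : List LTree → List Bool
  | [] => []
  | t :: ts => true :: (t.toDyck ++ (false :: LTree.toDyckList ts))
end

/-- The upper path `Q = u Q' d` of `I_T`, where `Q'` corresponds to `T`. -/
def Qpath (T : LTree) : List Bool := true :: (T.toDyck ++ [false])

/-! ### The certificate process -/

/-- The least index `> i` not colored red. -/
def nextBlack (red : Finset ℕ) (i : ℕ) : ℕ :=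
  Nat.find (p := fun j => i < j ∧ j ∉ red) (by
    refine ⟨red.sup id + i + 1, by omega, fun h => ?_⟩
    have := Finset.le_sup (f := id) h
    simp only [id_eq] at this
    omega)

/-- The `k`-th black (non-red) index after `i`. -/
def kthBlack (red : Finset ℕ) (i : ℕ) : ℕ → ℕ
  | 0 => i
  | k + 1 => nextBlack red (kthBlack red i k)

/-- The set of red nodes after processing the `k` nodes `n, n-1, …, n-k+1`
in reverse preorder; at the step for a non-leaf node `i` the first `r i` black
nodes after `i` are colored red. -/
def redGo (r : ℕ → ℕ) (lf : ℕ → Bool) (n : ℕ) : ℕ → Finset ℕ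
  | 0 => ∅
  | k + 1 =>
      let s := redGo r lf n k
      let i := n - k
      if lf i then s else s ∪ (Finset.Icc 1 (r i)).image (kthBlack s i)

/-- The certificate of node `i`: itself if `i` is a leaf, otherwise the node just
before the `(r i + 1)`-st black node after `i` at the step for `i`. -/
def certAux (r : ℕ → ℕ) (lf : ℕ → Bool) (n i : ℕ) : ℕ :=
  if lf i then i else kthBlack (redGo r lf n (n - i)) i (r i + 1) - 1

/-- The certificate (as a preorder index) of the `i`-th preorder node of `T`. -/
def cert (T : LTree) (i : ℕ) : ℕ :=
  certAux (fun j => (T.nth j).aVal.toNat) (fun j => (T.nth j).isLeaf) T.size i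

/-- `c(i)`: the number of nodes of `T` whose certificate is node `i`. -/
def certCount (T : LTree) (i : ℕ) : ℕ :=
  ((List.range (T.size + 1)).filter (fun j => cert T j == i)).length

/-- The lower path of `I_T`: concatenation of `u d^{c(v)}` over nodes in preorder. -/
def Ppath (T : LTree) : List Bool :=
  ((List.range (T.size + 1)).map (fun i => true :: List.replicate (certCount T i) false)).flatten

/-! ### Statistics on degree trees -/

/-- Number of leaf nodes. -/
def lnode (T : LTree) : ℕ := (T.preSub.filter (fun t => t.isLeaf)).length

/-- Number of zero nodes: internal nodes whose leftmost descending edge is labeled `0`. -/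
def znode (T : LTree) : ℕ :=
  (T.preSub.filter (fun t => !t.isLeaf && decide (t.aVal = 0))).length

/-- Number of positive nodes: internal nodes whose leftmost descending edge has positive label. -/
def pnode (T : LTree) : ℕ :=
  (T.preSub.filter (fun t => !t.isLeaf && decide (0 < t.aVal))).length

/-! ### Unlabeled shapes (for fixing `T` while varying `ℓ`) -/

/-- An unlabeled plane tree. -/
inductive PShape : Type where
  | node : List PShape → PShape

mutual
/-- The underlying unlabeled plane tree of a labeled tree. -/
def LTree.shape : LTree → PShape
  | .node _ ts => .node (LTree.shapeList ts)
def LTree.shapeList : List LTree → List PShape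
  | [] => []
  | t :: ts => t.shape :: LTree.shapeList ts
end

/-- The defining relations of `T_I`: `(T, ℓ) = T_I([P,Q])` for a new interval
`[P,Q]` of size `n+1`, i.e. `T` corresponds to `Q'` (where `Q = uQ'd`) under the
classical bijection, and the leftmost descending edge of the `i`-th preorder node
is labeled by the number of rising contacts of the factor of `P` strictly between
the `(i+1)`-st up step and its matching down step. -/
def TIrel (n : ℕ) (P Q : List Bool) (T : LTree) : Prop :=
  IsDegreeTree T ∧ T.size = n ∧ Q = Qpath T ∧
    ∀ i ≤ n, (T.nth i).children ≠ [] →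
      (T.nth i).aVal = (risingContacts (Pslice P (i + 1)) : ℤ)

section Black
variable (red : Finset ℕ)

theorem nextBlack_gt (i : ℕ) : i < nextBlack red i :=
  (Nat.find_spec (p := fun j => i < j ∧ j ∉ red) _).1

theorem nextBlack_not_mem (i : ℕ) : nextBlack red i ∉ red :=
  (Nat.find_spec (p := fun j => i < j ∧ j ∉ red) _).2

theorem nextBlack_le {i j : ℕ} (h1 : i < j) (h2 : j ∉ red) : nextBlack red i ≤ j :=
  Nat.find_min' _ ⟨h1, h2⟩

theorem mem_of_lt_nextBlack {i j : ℕ} (h1 : i < j) (h2 : j < nextBlack red i) : j ∈ red := by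
  have := Nat.find_min (p := fun j => i < j ∧ j ∉ red) _ h2
  simp only [not_and, not_not] at this
  exact this h1

theorem kthBlack_ge (i m : ℕ) : i + m ≤ kthBlack red i m := by
  induction m with
  | zero => simp [kthBlack]
  | succ m ih =>
    have := nextBlack_gt red (kthBlack red i m)
    simp only [kthBlack]; omega

theorem kthBlack_lt_succ (i m : ℕ) : kthBlack red i m < kthBlack red i (m + 1) :=
  nextBlack_gt red _

theorem kthBlack_strictMono (i : ℕ) {m p : ℕ} (h : m < p) :
    kthBlack red i m < kthBlack red i p := by
  induction p with
  | zero => omega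
  | succ q ih =>
    rcases Nat.lt_succ_iff_lt_or_eq.1 h with h' | h'
    · exact (ih h').trans (kthBlack_lt_succ red i q)
    · exact h' ▸ kthBlack_lt_succ red i m

theorem kthBlack_not_mem (i m : ℕ) : kthBlack red i (m + 1) ∉ red :=
  nextBlack_not_mem red _

theorem blacks_Ioc_kthBlack_le (i m : ℕ) :
    ((Finset.Ioc i (kthBlack red i m)).filter (· ∉ red)).card ≤ m := by
  induction m with
  | zero => simp [kthBlack]
  | succ m ih =>
    have hix : i ≤ kthBlack red i m := by have := kthBlack_ge red i m; omega
    have hxn : kthBlack red i m < kthBlack red i (m+1) := kthBlack_lt_succ red i m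
    have hsplit : Finset.Ioc i (kthBlack red i (m+1)) =
        Finset.Ioc i (kthBlack red i m) ∪ Finset.Ioc (kthBlack red i m) (kthBlack red i (m+1)) := by
      rw [Finset.Ioc_union_Ioc_eq_Ioc hix (le_of_lt hxn)]
    rw [hsplit, Finset.filter_union]
    have h2 : (Finset.Ioc (kthBlack red i m) (kthBlack red i (m+1))).filter (· ∉ red)
        ⊆ {kthBlack red i (m+1)} := by
      intro j hj
      simp only [Finset.mem_filter, Finset.mem_Ioc, decide_eq_true_eq] at hj
      simp only [Finset.mem_singleton]
      by_contra hne
      have hlt : j < kthBlack red i (m+1) := lt_of_le_of_ne hj.1.2 hne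
      exact hj.2 (mem_of_lt_nextBlack red hj.1.1 hlt)
    have hle := Finset.card_union_le ((Finset.Ioc i (kthBlack red i m)).filter (· ∉ red))
      ((Finset.Ioc (kthBlack red i m) (kthBlack red i (m+1))).filter (· ∉ red))
    have h3 := Finset.card_le_card h2
    simp only [Finset.card_singleton] at h3
    omega

theorem kthBlack_le_of_blacks {i b m : ℕ}
    (h : m + 1 ≤ ((Finset.Ioc i b).filter (· ∉ red)).card) :
    kthBlack red i (m + 1) ≤ b := by
  induction m with
  | zero =>
    obtain ⟨j, hj⟩ := Finset.card_pos.1 (by omega : 0 < ((Finset.Ioc i b).filter (· ∉ red)).card)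
    simp only [Finset.mem_filter, Finset.mem_Ioc, decide_eq_true_eq] at hj
    simpa [kthBlack] using (nextBlack_le red hj.1.1 hj.2).trans hj.1.2
  | succ m ih =>
    have hcard : m + 1 ≤ ((Finset.Ioc i b).filter (· ∉ red)).card := by omega
    have hx : kthBlack red i (m+1) ≤ b := ih hcard
    have hix : i ≤ kthBlack red i (m+1) := by have := kthBlack_ge red i (m+1); omega
    have hsplit : Finset.Ioc i b =
        Finset.Ioc i (kthBlack red i (m+1)) ∪ Finset.Ioc (kthBlack red i (m+1)) b := by
      rw [Finset.Ioc_union_Ioc_eq_Ioc hix hx]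
    have hdisj : Disjoint ((Finset.Ioc i (kthBlack red i (m+1))).filter (· ∉ red))
        ((Finset.Ioc (kthBlack red i (m+1)) b).filter (· ∉ red)) := by
      rw [Finset.disjoint_left]
      intro a ha hb
      simp only [Finset.mem_filter, Finset.mem_Ioc] at ha hb
      omega
    have hcardsum : ((Finset.Ioc i b).filter (· ∉ red)).card =
        ((Finset.Ioc i (kthBlack red i (m+1))).filter (· ∉ red)).card +
        ((Finset.Ioc (kthBlack red i (m+1)) b).filter (· ∉ red)).card := by
      rw [hsplit, Finset.filter_union, Finset.card_union_of_disjoint hdisj]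
    have h1 := blacks_Ioc_kthBlack_le red i (m+1)
    have hpos : 0 < ((Finset.Ioc (kthBlack red i (m+1)) b).filter (· ∉ red)).card := by
      omega
    obtain ⟨j, hj⟩ := Finset.card_pos.1 hpos
    simp only [Finset.mem_filter, Finset.mem_Ioc, decide_eq_true_eq] at hj
    have hfin : kthBlack red i (m+1+1) ≤ j := by
      simpa [kthBlack] using nextBlack_le red hj.1.1 hj.2
    omega

end Black
section RedGo
variable (r : ℕ → ℕ) (lf : ℕ → Bool) (n : ℕ)

theorem redGo_succ (k : ℕ) :
    redGo r lf n (k + 1) = if lf (n - k) then redGo r lf n k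
      else redGo r lf n k ∪ (Finset.Icc 1 (r (n - k))).image (kthBlack (redGo r lf n k) (n - k)) := by
  simp only [redGo]

theorem redGo_mono {k k' : ℕ} (h : k ≤ k') : redGo r lf n k ⊆ redGo r lf n k' := by
  induction k' with
  | zero => simp_all
  | succ k' ih =>
    rcases Nat.lt_succ_iff_lt_or_eq.1 (Nat.lt_succ_of_le h) with h' | h'
    · refine (ih (by omega)).trans ?_
      rw [redGo_succ]
      split
      · exact subset_rfl
      · exact Finset.subset_union_left
    · exact h' ▸ subset_rfl

theorem mem_redGo {k x : ℕ} (hx : x ∈ redGo r lf n k) : n + 2 ≤ x + k := by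
  induction k with
  | zero => simp [redGo] at hx
  | succ k ih =>
    rw [redGo_succ] at hx
    split at hx
    · have := ih hx; omega
    · rcases Finset.mem_union.1 hx with h | h
      · have := ih h; omega
      · obtain ⟨m, hm, hmx⟩ := Finset.mem_image.1 h
        simp only [Finset.mem_Icc] at hm
        have := kthBlack_ge (redGo r lf n k) (n - k) m
        omega

end RedGo

section PreSub

theorem preSub_eq (t : LTree) : t.preSub = t :: LTree.preSubList t.children := by
  cases t; rfl

mutual
theorem preSub_length (t : LTree) : t.preSub.length = t.size + 1 := by
  cases t with
  | node l ts =>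
    simp only [LTree.preSub, List.length_cons, LTree.size]
    rw [preSubList_length]
theorem preSubList_length (ts : List LTree) : (LTree.preSubList ts).length = LTree.sizeList ts := by
  cases ts with
  | nil => rfl
  | cons u us =>
    simp only [LTree.preSubList, List.length_append, LTree.sizeList]
    rw [preSub_length, preSubList_length]
    omega
end

theorem self_mem_preSub (t : LTree) : t ∈ t.preSub := by
  rw [preSub_eq]; exact List.mem_cons_self

theorem mem_of_mem_preSubList {u : LTree} {ts : List LTree} (h : u ∈ LTree.preSubList ts) :
    ∃ t ∈ ts, u ∈ t.preSub := by
  induction ts with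
  | nil => simp [LTree.preSubList] at h
  | cons v vs ih =>
    simp only [LTree.preSubList, List.mem_append] at h
    rcases h with h | h
    · exact ⟨v, List.mem_cons_self, h⟩
    · obtain ⟨t, ht, hu⟩ := ih h
      exact ⟨t, List.mem_cons_of_mem _ ht, hu⟩

mutual
theorem preSub_drop (t : LTree) (j : ℕ) (hj : j ≤ t.size) :
    ∃ rest, t.preSub.drop j = (t.preSub.getD j default).preSub ++ rest := by
  cases t with
  | node l ts =>
    cases j with
    | zero =>
      refine ⟨[], ?_⟩
      rw [preSub_eq]
      simp only [List.drop_zero, List.append_nil, List.getD_cons_zero]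
      exact (preSub_eq _).symm
    | succ j' =>
      simp only [LTree.preSub, List.drop_succ_cons, List.getD_cons_succ]
      apply preSubList_drop
      rw [preSubList_length]
      simp only [LTree.size] at hj
      omega
theorem preSubList_drop (ts : List LTree) (j : ℕ) (hj : j < (LTree.preSubList ts).length) :
    ∃ rest, (LTree.preSubList ts).drop j = ((LTree.preSubList ts).getD j default).preSub ++ rest := by
  cases ts with
  | nil => simp [LTree.preSubList] at hj
  | cons u us =>
    simp only [LTree.preSubList] at hj ⊢
    by_cases hcase : j < u.preSub.length
    · rw [List.drop_append_of_le_length (le_of_lt hcase),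
        List.getD_append _ _ _ _ hcase]
      obtain ⟨rest, hrest⟩ := preSub_drop u j (by have := preSub_length u; omega)
      exact ⟨rest ++ LTree.preSubList us, by rw [hrest, List.append_assoc]⟩
    · push_neg at hcase
      rw [List.drop_append, List.drop_eq_nil_of_le hcase, List.nil_append,
        List.getD_eq_getElem?_getD, List.getElem?_append_right hcase,
        ← List.getD_eq_getElem?_getD]
      apply preSubList_drop
      simp only [List.length_append] at hj
      omega
end

theorem nth_extent (T : LTree) (j : ℕ) (hj : j ≤ T.size) : j + (T.nth j).size ≤ T.size := by
  obtain ⟨rest, hrest⟩ := preSub_drop T j hj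
  have h1 : (T.preSub.drop j).length = T.size + 1 - j := by
    rw [List.length_drop, preSub_length]
  rw [hrest] at h1
  simp only [List.length_append] at h1
  have := preSub_length (T.preSub.getD j default)
  simp only [LTree.nth]
  omega

theorem nth_window (T : LTree) (j m : ℕ) (hj : j ≤ T.size) (hm : m ≤ (T.nth j).size) :
    T.nth (j + m) = (T.nth j).preSub.getD m default := by
  obtain ⟨rest, hrest⟩ := preSub_drop T j hj
  have hext := nth_extent T j hj
  have hlen : j + m < T.preSub.length := by rw [preSub_length]; omega
  have hlen2 : m < (T.nth j).preSub.length := by rw [preSub_length]; omega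
  simp only [LTree.nth] at hlen2 ⊢
  rw [List.getD_eq_getElem _ _ hlen, List.getD_eq_getElem _ _ hlen2]
  have h1 : T.preSub[j + m] = (T.preSub.drop j)[m]'(by simp [List.length_drop]; omega) := by
    simp [List.getElem_drop]
  rw [h1]
  have h2 : (T.preSub.drop j)[m]'(by simp [List.length_drop]; omega) =
      ((T.preSub.getD j default).preSub ++ rest)[m]'(by rw [← hrest]; simp [List.length_drop]; omega) := by
    congr 1
  rw [h2, List.getElem_append_left]

theorem nth_zero (T : LTree) : T.nth 0 = T := by
  simp [LTree.nth, preSub_eq]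

theorem isDegreeTree_mem_preSub {T : LTree} (hT : IsDegreeTree T) :
    ∀ u ∈ T.preSub, IsDegreeTree u := by
  induction hT with
  | leaf =>
    intro u hu
    simp only [LTree.preSub, LTree.preSubList] at hu
    simp only [List.mem_singleton] at hu
    exact hu ▸ IsDegreeTree.leaf
  | internal l a t₁ ts h₁ h ha₀ ha₁ hl ih₁ ih =>
    intro u hu
    simp only [LTree.preSub, LTree.preSubList, List.mem_cons, List.mem_append] at hu
    rcases hu with hu | hu | hu
    · exact hu ▸ IsDegreeTree.internal l a t₁ ts h₁ h ha₀ ha₁ hl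
    · exact ih₁ u hu
    · obtain ⟨t, ht, hmem⟩ := mem_of_mem_preSubList hu
      exact ih t ht u hmem

theorem label_nonneg {T : LTree} (hT : IsDegreeTree T) : 0 ≤ T.label := by
  induction hT with
  | leaf => simp [LTree.label]
  | internal l a t₁ ts h₁ h ha₀ ha₁ hl ih₁ ih =>
    have hsum : 0 ≤ (ts.map LTree.label).sum := by
      apply List.sum_nonneg
      intro x hx
      obtain ⟨t, ht, rfl⟩ := List.mem_map.1 hx
      exact ih t ht
    simp only [LTree.label]
    omega

end PreSub
mutual
theorem mainT (r : ℕ → ℕ) (lf : ℕ → Bool) (n : ℕ) (t : LTree) (hdt : IsDegreeTree t)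
    (j : ℕ) (hjn : j + t.size ≤ n)
    (hw : ∀ m, m < t.preSub.length → lf (j + m) = (t.preSub.getD m default).isLeaf ∧
      r (j + m) = (t.preSub.getD m default).aVal.toNat) :
    (∀ x ∈ redGo r lf n (n + 1 - j),
        x ∈ redGo r lf n (n - (j + t.size)) ∨ (j < x ∧ x ≤ j + t.size)) ∧
    (((Finset.Icc j (j + t.size)).filter (fun x => x ∉ redGo r lf n (n + 1 - j))).card : ℤ)
      = t.label + 1 := by
  cases hdt with
  | leaf =>
    have hsz : (LTree.node 0 []).size = 0 := rfl
    have hjle : j ≤ n := by rw [hsz] at hjn; omega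
    have hlfj : lf j = true := by
      have := (hw 0 (by simp [preSub_length])).1
      simpa [LTree.preSub, LTree.preSubList, LTree.isLeaf, LTree.children] using this
    have hstate : redGo r lf n (n + 1 - j) = redGo r lf n (n - j) := by
      have h1 : n + 1 - j = (n - j) + 1 := by omega
      rw [h1, redGo_succ]
      have h2 : n - (n - j) = j := by omega
      rw [h2, hlfj]
      simp
    constructor
    · intro x hx
      left
      rw [hstate] at hx
      simpa [hsz] using hx
    · rw [hsz]
      simp only [Nat.add_zero, Finset.Icc_self]
      have hj_not : j ∉ redGo r lf n (n + 1 - j) := by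
        intro hmem
        have := mem_redGo r lf n hmem
        omega
      rw [Finset.filter_singleton, if_pos hj_not]
      simp [LTree.label]
  | internal l a t₁ ts h₁ h ha₀ ha₁ hl =>
    have hszeq : (LTree.node l (t₁ :: ts)).size = LTree.sizeList (t₁ :: ts) := rfl
    have hs_unfold : LTree.sizeList (t₁ :: ts) = 1 + t₁.size + LTree.sizeList ts := rfl
    have hs_ge : 1 + t₁.size ≤ LTree.sizeList (t₁ :: ts) := by omega
    rw [hszeq] at hjn ⊢
    have hjlt : j < n := by omega
    -- window hypotheses for the children list at j+1
    have hwL : ∀ m, m < (LTree.preSubList (t₁ :: ts)).length →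
        lf (j + 1 + m) = ((LTree.preSubList (t₁ :: ts)).getD m default).isLeaf ∧
        r (j + 1 + m) = ((LTree.preSubList (t₁ :: ts)).getD m default).aVal.toNat := by
      intro m hm
      have hlen : 1 + m < (LTree.node l (t₁ :: ts)).preSub.length := by
        simp only [LTree.preSub, List.length_cons]
        omega
      have hthis := hw (1 + m) hlen
      have hgd : (LTree.node l (t₁ :: ts)).preSub.getD (1 + m) default =
          (LTree.preSubList (t₁ :: ts)).getD m default := by
        simp only [LTree.preSub]
        rw [show 1 + m = m + 1 by omega, List.getD_cons_succ]
      rw [hgd] at hthis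
      rw [show j + 1 + m = j + (1 + m) by omega]
      exact hthis
    -- window hypothesis for t₁ at j+1
    have hwT1 : ∀ m, m < t₁.preSub.length →
        lf (j + 1 + m) = (t₁.preSub.getD m default).isLeaf ∧
        r (j + 1 + m) = (t₁.preSub.getD m default).aVal.toNat := by
      intro m hm
      have hm' : m < (LTree.preSubList (t₁ :: ts)).length := by
        simp only [LTree.preSubList, List.length_append]
        omega
      have hthis := hwL m hm'
      have hgd : (LTree.preSubList (t₁ :: ts)).getD m default = t₁.preSub.getD m default := by
        simp only [LTree.preSubList]
        rw [List.getD_append _ _ _ _ hm]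
      rwa [hgd] at hthis
    have hL := mainL r lf n (t₁ :: ts) (by
        intro u hu
        rcases List.mem_cons.1 hu with rfl | hu
        · exact h₁
        · exact h u hu) (j + 1) (by omega) hwL
    have hT1 := mainT r lf n t₁ h₁ (j + 1) (by omega) hwT1
    rw [show n + 1 - (j + 1) = n - j by omega] at hL hT1
    rw [show n + 1 - (j + 1 + LTree.sizeList (t₁ :: ts)) = n - (j + LTree.sizeList (t₁ :: ts))
      by omega] at hL
    obtain ⟨haL, hbL⟩ := hL
    obtain ⟨haT1, hbT1⟩ := hT1
    -- facts about node j
    have hlfj : lf j = false := by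
      have := (hw 0 (by simp [preSub_length])).1
      simpa [LTree.preSub, LTree.isLeaf, LTree.children, List.isEmpty] using this
    have hrj : r j = a.toNat := by
      have hthis := (hw 0 (by simp [preSub_length])).2
      simp only [Nat.add_zero, LTree.preSub, List.getD_cons_zero] at hthis
      have haval : (LTree.node l (t₁ :: ts)).aVal = a := by
        show ((t₁ :: ts).length : ℤ) + ((t₁ :: ts).map LTree.label).sum - l = a
        simp only [List.length_cons, List.map_cons, List.sum_cons]
        push_cast
        omega
      rw [haval] at hthis
      exact hthis
    have hstep : redGo r lf n (n + 1 - j) = redGo r lf n (n - j) ∪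
        (Finset.Icc 1 (r j)).image (kthBlack (redGo r lf n (n - j)) j) := by
      have h1 : n + 1 - j = (n - j) + 1 := by omega
      rw [h1, redGo_succ, show n - (n - j) = j by omega, hlfj]
      simp
    have hlab₁ : 0 ≤ t₁.label := label_nonneg h₁
    have hbT1' : ((Finset.Icc (j+1) (j+1+t₁.size)).filter
        (fun x => x ∉ redGo r lf n (n - j))).card = t₁.label.toNat + 1 := by
      omega
    -- properties of the newly colored set R
    have hIoc : Finset.Ioc j (j+1+t₁.size) = Finset.Icc (j+1) (j+1+t₁.size) := by
      ext x
      simp only [Finset.mem_Ioc, Finset.mem_Icc]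
      omega
    have hRprop : ∀ m, 1 ≤ m → m ≤ r j →
        j < kthBlack (redGo r lf n (n - j)) j m ∧
        kthBlack (redGo r lf n (n - j)) j m ≤ j + 1 + t₁.size ∧
        kthBlack (redGo r lf n (n - j)) j m ∉ redGo r lf n (n - j) := by
      intro m hm1 hm2
      obtain ⟨m', rfl⟩ : ∃ m', m = m' + 1 := ⟨m - 1, by omega⟩
      refine ⟨?_, ?_, kthBlack_not_mem _ _ _⟩
      · have := kthBlack_ge (redGo r lf n (n - j)) j (m' + 1)
        omega
      · apply kthBlack_le_of_blacks
        rw [hIoc]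
        show m' + 1 ≤ ((Finset.Icc (j+1) (j+1+t₁.size)).filter
          (fun x => x ∉ redGo r lf n (n - j))).card
        omega
    have hRsub : ∀ y ∈ (Finset.Icc 1 (r j)).image (kthBlack (redGo r lf n (n - j)) j),
        j < y ∧ y ≤ j + 1 + t₁.size ∧ y ∉ redGo r lf n (n - j) := by
      intro y hy
      obtain ⟨m, hm, rfl⟩ := Finset.mem_image.1 hy
      simp only [Finset.mem_Icc] at hm
      exact hRprop m hm.1 hm.2
    have hRcard : ((Finset.Icc 1 (r j)).image (kthBlack (redGo r lf n (n - j)) j)).card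
        = r j := by
      rw [Finset.card_image_of_injOn, Nat.card_Icc]
      · omega
      · intro m₁ hm₁ m₂ hm₂ heq
        by_contra hne
        rcases Nat.lt_or_ge m₁ m₂ with hlt | hge
        · exact absurd heq (ne_of_lt (kthBlack_strictMono _ _ hlt))
        · have hlt : m₂ < m₁ := by omega
          exact absurd heq.symm (ne_of_lt (kthBlack_strictMono _ _ hlt))
    constructor
    · intro x hx
      rw [hstep] at hx
      rcases Finset.mem_union.1 hx with hx | hx
      · rcases haL x hx with hx' | hx'
        · left; exact hx'
        · right; omega
      · have := hRsub x hx
        right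
        omega
    · -- the black count
      have hjS : j ∉ redGo r lf n (n - j) := by
        intro hmem
        have := mem_redGo r lf n hmem
        omega
      have hRB : (Finset.Icc 1 (r j)).image (kthBlack (redGo r lf n (n - j)) j) ⊆
          (Finset.Icc j (j + LTree.sizeList (t₁ :: ts))).filter
            (fun x => x ∉ redGo r lf n (n - j)) := by
        intro y hy
        have := hRsub y hy
        simp only [Finset.mem_filter, Finset.mem_Icc]
        exact ⟨⟨by omega, by omega⟩, this.2.2⟩
      have hF : (Finset.Icc j (j + LTree.sizeList (t₁ :: ts))).filter
            (fun x => x ∉ redGo r lf n (n + 1 - j)) =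
          ((Finset.Icc j (j + LTree.sizeList (t₁ :: ts))).filter
            (fun x => x ∉ redGo r lf n (n - j))) \
          ((Finset.Icc 1 (r j)).image (kthBlack (redGo r lf n (n - j)) j)) := by
        rw [hstep]
        ext x
        simp only [Finset.mem_filter, Finset.mem_sdiff, Finset.mem_union]
        tauto
      have hsplit : Finset.Icc j (j + LTree.sizeList (t₁ :: ts)) =
          insert j (Finset.Ico (j+1) (j+1+LTree.sizeList (t₁ :: ts))) := by
        ext x
        simp only [Finset.mem_Icc, Finset.mem_insert, Finset.mem_Ico]
        omega
      have hBcard : ((Finset.Icc j (j + LTree.sizeList (t₁ :: ts))).filter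
            (fun x => x ∉ redGo r lf n (n - j))).card =
          ((Finset.Ico (j+1) (j+1+LTree.sizeList (t₁ :: ts))).filter
            (fun x => x ∉ redGo r lf n (n - j))).card + 1 := by
        rw [hsplit, Finset.filter_insert, if_pos hjS, Finset.card_insert_of_notMem]
        intro hmem
        simp only [Finset.mem_filter, Finset.mem_Ico] at hmem
        omega
      rw [hF]
      rw [Finset.card_sdiff_of_subset hRB]
      have hle := Finset.card_le_card hRB
      show (↑(((Finset.Icc j (j + LTree.sizeList (t₁ :: ts))).filter
            (fun x => x ∉ redGo r lf n (n - j))).card -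
          ((Finset.Icc 1 (r j)).image (kthBlack (redGo r lf n (n - j)) j)).card) : ℤ)
        = (LTree.node l (t₁ :: ts)).label + 1
      simp only [LTree.label]
      simp only [List.length_cons, List.map_cons, List.sum_cons] at hbL
      push_cast [hbL]
      omega
theorem mainL (r : ℕ → ℕ) (lf : ℕ → Bool) (n : ℕ) (ts : List LTree)
    (hdt : ∀ t ∈ ts, IsDegreeTree t) (j : ℕ) (hjn : j + LTree.sizeList ts ≤ n + 1)
    (hw : ∀ m, m < (LTree.preSubList ts).length →
      lf (j + m) = ((LTree.preSubList ts).getD m default).isLeaf ∧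
      r (j + m) = ((LTree.preSubList ts).getD m default).aVal.toNat) :
    (∀ x ∈ redGo r lf n (n + 1 - j),
        x ∈ redGo r lf n (n + 1 - (j + LTree.sizeList ts)) ∨
          (j ≤ x ∧ x < j + LTree.sizeList ts)) ∧
    (((Finset.Ico j (j + LTree.sizeList ts)).filter
        (fun x => x ∉ redGo r lf n (n + 1 - j))).card : ℤ)
      = (ts.length : ℤ) + (ts.map LTree.label).sum := by
  cases ts with
  | nil =>
    constructor
    · intro x hx
      left
      simpa [LTree.sizeList] using hx
    · simp [LTree.sizeList]
  | cons u us =>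
    have hs_unfold : LTree.sizeList (u :: us) = 1 + u.size + LTree.sizeList us := rfl
    have hlenu := preSub_length u
    -- window for us at j + 1 + u.size
    have hwUs : ∀ m, m < (LTree.preSubList us).length →
        lf (j + 1 + u.size + m) = ((LTree.preSubList us).getD m default).isLeaf ∧
        r (j + 1 + u.size + m) = ((LTree.preSubList us).getD m default).aVal.toNat := by
      intro m hm
      have hlen : u.preSub.length + m < (LTree.preSubList (u :: us)).length := by
        simp only [LTree.preSubList, List.length_append]
        omega
      have hthis := hw (u.preSub.length + m) hlen
      have hgd : (LTree.preSubList (u :: us)).getD (u.preSub.length + m) default =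
          (LTree.preSubList us).getD m default := by
        simp only [LTree.preSubList]
        rw [List.getD_append_right _ _ _ _ (by omega)]
        congr 1
        omega
      rw [hgd] at hthis
      rw [show j + 1 + u.size + m = j + (u.preSub.length + m) by omega]
      exact hthis
    -- window for u at j
    have hwU : ∀ m, m < u.preSub.length →
        lf (j + m) = (u.preSub.getD m default).isLeaf ∧
        r (j + m) = (u.preSub.getD m default).aVal.toNat := by
      intro m hm
      have hlen : m < (LTree.preSubList (u :: us)).length := by
        simp only [LTree.preSubList, List.length_append]
        omega
      have hthis := hw m hlen
      have hgd : (LTree.preSubList (u :: us)).getD m default = u.preSub.getD m default := by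
        simp only [LTree.preSubList]
        rw [List.getD_append _ _ _ _ hm]
      rwa [hgd] at hthis
    have hUs := mainL r lf n us (fun t ht => hdt t (List.mem_cons_of_mem _ ht))
      (j + 1 + u.size) (by omega) hwUs
    have hU := mainT r lf n u (hdt u List.mem_cons_self) j (by omega) hwU
    rw [show n - (j + u.size) = n + 1 - (j + 1 + u.size) by omega] at hU
    obtain ⟨haU, hbU⟩ := hU
    obtain ⟨haUs, hbUs⟩ := hUs
    constructor
    · intro x hx
      rcases haU x hx with hx' | hx'
      · rcases haUs x hx' with hx'' | hx''
        · left
          rw [show n + 1 - (j + LTree.sizeList (u :: us)) =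
            n + 1 - (j + 1 + u.size + LTree.sizeList us) by omega]
          exact hx''
        · right; omega
      · right; omega
    · -- black count
      have hpres : (Finset.Ico (j+1+u.size) (j+1+u.size+LTree.sizeList us)).filter
            (fun x => x ∉ redGo r lf n (n + 1 - j)) =
          (Finset.Ico (j+1+u.size) (j+1+u.size+LTree.sizeList us)).filter
            (fun x => x ∉ redGo r lf n (n + 1 - (j + 1 + u.size))) := by
        ext x
        simp only [Finset.mem_filter, Finset.mem_Ico]
        constructor
        · rintro ⟨hx1, hx2⟩
          refine ⟨hx1, fun hmem => hx2 ?_⟩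
          exact redGo_mono r lf n (by omega) hmem
        · rintro ⟨hx1, hx2⟩
          refine ⟨hx1, fun hmem => ?_⟩
          rcases haU x hmem with h' | h'
          · exact hx2 h'
          · omega
      have hsplit : Finset.Ico j (j + LTree.sizeList (u :: us)) =
          Finset.Icc j (j + u.size) ∪
          Finset.Ico (j+1+u.size) (j+1+u.size+LTree.sizeList us) := by
        ext x
        simp only [Finset.mem_Ico, Finset.mem_union, Finset.mem_Icc]
        omega
      have hdisj : Disjoint ((Finset.Icc j (j + u.size)).filter
            (fun x => x ∉ redGo r lf n (n + 1 - j)))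
          ((Finset.Ico (j+1+u.size) (j+1+u.size+LTree.sizeList us)).filter
            (fun x => x ∉ redGo r lf n (n + 1 - j))) := by
        rw [Finset.disjoint_left]
        intro x hx1 hx2
        simp only [Finset.mem_filter, Finset.mem_Icc, Finset.mem_Ico] at hx1 hx2
        omega
      rw [hsplit, Finset.filter_union, Finset.card_union_of_disjoint hdisj, hpres]
      simp only [List.length_cons, List.map_cons, List.sum_cons]
      push_cast [hbU, hbUs]
      ring
end
theorem stmt5 (T : LTree) (hT : IsDegreeTree T) (i : ℕ) (hi : i ≤ T.size) :
    cert T i = i ∨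
      ((T.nth i).children ≠ [] ∧ i + 1 ≤ cert T i ∧
        cert T i < i + 1 + (T.nth (i + 1)).size) := by
  set r : ℕ → ℕ := fun j => (T.nth j).aVal.toNat with hrdef
  set lf : ℕ → Bool := fun j => (T.nth j).isLeaf with hlfdef
  set n := T.size with hndef
  have hcert : cert T i = certAux r lf n i := rfl
  have hmem : T.nth i ∈ T.preSub := by
    have hlen : i < T.preSub.length := by rw [preSub_length]; omega
    rw [LTree.nth, List.getD_eq_getElem _ _ hlen]
    exact List.getElem_mem hlen
  have hdt := isDegreeTree_mem_preSub hT _ hmem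
  rcases hteq : T.nth i with ⟨l, cs⟩
  rcases cs with _ | ⟨t₁, ts⟩
  · -- leaf case
    left
    have hlf : lf i = true := by
      rw [hlfdef]
      simp only [hteq, LTree.isLeaf, LTree.children, List.isEmpty]
    rw [hcert, certAux, hlf]
    simp
  · rw [hteq] at hdt
    cases hdt with
    | internal l a t₁ ts h₁ h ha₀ ha₁ hl =>
    have hlf : lf i = false := by
      rw [hlfdef]
      simp only [hteq, LTree.isLeaf, LTree.children, List.isEmpty]
    have hext : i + (T.nth i).size ≤ n := nth_extent T i hi
    have hsz : (T.nth i).size = LTree.sizeList (t₁ :: ts) := by rw [hteq]; rfl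
    have hs_unfold : LTree.sizeList (t₁ :: ts) = 1 + t₁.size + LTree.sizeList ts := rfl
    have hjn1 : i + 1 + t₁.size ≤ n := by omega
    have hi1 : i + 1 ≤ n := by omega
    -- T.nth (i + 1) = t₁
    have hnth1 : T.nth (i + 1) = t₁ := by
      have := nth_window T i 1 hi (by rw [hsz]; omega)
      rw [hteq] at this
      rw [this, preSub_eq]
      simp only [List.getD_cons_succ, LTree.children, LTree.preSubList]
      rw [List.getD_append _ _ _ _ (by rw [preSub_length]; omega), preSub_eq,
        List.getD_cons_zero]
    -- window hypothesis for t₁ at i + 1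
    have hwT1 : ∀ m, m < t₁.preSub.length →
        lf (i + 1 + m) = (t₁.preSub.getD m default).isLeaf ∧
        r (i + 1 + m) = (t₁.preSub.getD m default).aVal.toNat := by
      intro m hm
      have hm' : m ≤ (T.nth (i+1)).size := by
        rw [hnth1]
        rw [preSub_length] at hm
        omega
      have hwin := nth_window T (i+1) m hi1 hm'
      rw [hnth1] at hwin
      rw [hlfdef, hrdef]
      simp only
      rw [hwin]
      exact ⟨rfl, rfl⟩
    have hmain := mainT r lf n t₁ h₁ (i + 1) hjn1 hwT1
    rw [show n + 1 - (i + 1) = n - i by omega] at hmain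
    rw [show n - (i + 1 + t₁.size) = n - (i + 1 + t₁.size) from rfl] at hmain
    obtain ⟨-, hb⟩ := hmain
    have hlab₁ : 0 ≤ t₁.label := label_nonneg h₁
    have hb' : ((Finset.Icc (i+1) (i+1+t₁.size)).filter
        (fun x => x ∉ redGo r lf n (n - i))).card = t₁.label.toNat + 1 := by
      omega
    have hri : r i = a.toNat := by
      rw [hrdef]
      simp only [hteq]
      have haval : (LTree.node l (t₁ :: ts)).aVal = a := by
        show ((t₁ :: ts).length : ℤ) + ((t₁ :: ts).map LTree.label).sum - l = a
        simp only [List.length_cons, List.map_cons, List.sum_cons]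
        push_cast
        omega
      rw [haval]
    have hcert2 : cert T i = kthBlack (redGo r lf n (n - i)) i (r i + 1) - 1 := by
      rw [hcert, certAux, hlf]
      simp
    have hIoc : Finset.Ioc i (i+1+t₁.size) = Finset.Icc (i+1) (i+1+t₁.size) := by
      ext x
      simp only [Finset.mem_Ioc, Finset.mem_Icc]
      omega
    have hupper : kthBlack (redGo r lf n (n - i)) i (r i + 1) ≤ i + 1 + t₁.size := by
      apply kthBlack_le_of_blacks
      rw [hIoc]
      show r i + 1 ≤ ((Finset.Icc (i+1) (i+1+t₁.size)).filter
        (fun x => x ∉ redGo r lf n (n - i))).card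
      omega
    have hlower := kthBlack_ge (redGo r lf n (n - i)) i (r i + 1)
    rcases Nat.eq_zero_or_pos (r i) with hr0 | hrpos
    · -- a = 0 : certificate is i itself
      left
      rw [hcert2, hr0]
      have hn1 : i + 1 ∉ redGo r lf n (n - i) := by
        intro hmem'
        have := mem_redGo r lf n hmem'
        omega
      have : kthBlack (redGo r lf n (n - i)) i 1 = i + 1 := by
        have h1 := nextBlack_gt (redGo r lf n (n - i)) i
        have h2 := nextBlack_le (redGo r lf n (n - i)) (Nat.lt_succ_self i) hn1
        show nextBlack (redGo r lf n (n - i)) (kthBlack (redGo r lf n (n - i)) i 0) = i + 1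
        show nextBlack (redGo r lf n (n - i)) i = i + 1
        omega
      rw [this]
      omega
    · right
      refine ⟨by simp [LTree.children], ?_, ?_⟩
      · rw [hcert2]; omega
      · rw [hcert2, hnth1]; omega
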